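/- For every E ∈ ℝ one has t_1(E)² − t_2(E) − 2 = 4λ². Moreover, for every E in the topological interior of σ_1 ∪ σ_2 one has t_2(E)² − t_3(E) − 2 > 0. -/

import Mathlib

noncomputable section

open Filter Topology

namespace TMH

/-- the pair `(A_n(E), B_n(E))`:  `A_0 = [[E−λ,−1],[1,0]]`, `B_0 = [[E+λ,−1],[1,0]]`,
`A_{n+1} = B_n A_n`, `B_{n+1} = A_n B_n`. -/
def AB (lam E : ℝ) : ℕ → Matrix (Fin 2) (Fin 2) ℝ × Matrix (Fin 2) (Fin 2) ℝ
  | 0 => (!![E - lam, -1; 1, 0], !![E + lam, -1; 1, 0])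
  | n + 1 => ((AB lam E n).2 * (AB lam E n).1, (AB lam E n).1 * (AB lam E n).2)

def A (lam E : ℝ) (n : ℕ) : Matrix (Fin 2) (Fin 2) ℝ := (AB lam E n).1
def B (lam E : ℝ) (n : ℕ) : Matrix (Fin 2) (Fin 2) ℝ := (AB lam E n).2

/-- the trace polynomials `t_n(E) = tr(A_n(E))` -/
def t (lam E : ℝ) (n : ℕ) : ℝ := (A lam E n).trace

/-- the set `Σ_I` of type-I energies -/
def SigmaI (lam : ℝ) : Set ℝ := {E | ∃ k : ℕ, 1 ≤ k ∧ t lam E k = 0}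

/-- the set `Σ_II` of type-II energies -/
def SigmaII (lam : ℝ) : Set ℝ :=
  {E | ∃ n₀ : ℕ, ∀ n : ℕ, n₀ ≤ n → |t lam E (2 * n)| ≤ 2 ∧ 2 < |t lam E (2 * n + 1)|}

/-- the set `Σ_III` of type-III energies -/
def SigmaIII (lam : ℝ) : Set ℝ :=
  {E | ∃ n₀ : ℕ, ∀ n : ℕ, n₀ ≤ n → |t lam E (2 * n + 1)| ≤ 2 ∧ 2 < |t lam E (2 * n)|}

end TMH
namespace TMH

lemma t1_eq (lam E : ℝ) : t lam E 1 = E^2 - lam^2 - 2 := by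
  simp [t, A, AB, Matrix.trace, Matrix.mul_apply, Fin.sum_univ_succ]
  ring

lemma t2_eq (lam E : ℝ) : t lam E 2 = (E^2 - lam^2)^2 - 4*E^2 + 2 := by
  simp [t, A, AB, Matrix.trace, Matrix.mul_apply, Fin.sum_univ_succ]
  ring

lemma t3_eq (lam E : ℝ) :
    t lam E 3 = (E^2-lam^2-2)^2*((E^2-lam^2)^2 - 4*E^2) + 2 := by
  simp [t, A, AB, Matrix.trace, Matrix.mul_apply, Fin.sum_univ_succ]
  ring

lemma t2_lt_two (lam : ℝ) (hlam : lam ≠ 0) (E : ℝ)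
    (hE : E ∈ interior ({E : ℝ | |t lam E 1| ≤ 2} ∪ {E : ℝ | |t lam E 2| ≤ 2})) :
    t lam E 2 < 2 := by
  have hlam2 : 0 < lam ^ 2 := by positivity
  have hmem := interior_subset hE
  rcases hmem with h1 | h2
  · -- |t1| ≤ 2, so t2 = t1² − 2 − 4λ² ≤ 2 − 4λ² < 2
    simp only [Set.mem_setOf_eq] at h1
    have h1' : t lam E 1 ^ 2 ≤ 4 := by
      have := abs_nonneg (t lam E 1)
      nlinarith [sq_abs (t lam E 1)]
    rw [t1_eq] at h1'
    rw [t2_eq]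
    nlinarith
  · simp only [Set.mem_setOf_eq] at h2
    have h2' : t lam E 2 ≤ 2 := (abs_le.mp h2).2
    rcases lt_or_eq_of_le h2' with h | heq
    · exact h
    -- t2 E = 2; derive contradiction
    exfalso
    have hP0 : (E^2 - lam^2)^2 - 4*E^2 = 0 := by
      have := heq
      rw [t2_eq] at this
      linarith
    -- near E, |t1| > 2, hence points near E lie in σ₂, so t2 ≤ 2 near E
    have ht1 : 2 < |t lam E 1| := by
      rw [t1_eq]
      by_contra h
      push_neg at h
      have : (E^2 - lam^2 - 2) ^ 2 ≤ 4 := by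
        nlinarith [sq_abs (E^2 - lam^2 - 2), abs_nonneg (E^2 - lam^2 - 2)]
      nlinarith
    have hcont : Continuous fun x : ℝ => |x^2 - lam^2 - 2| := by continuity
    have hU : {x : ℝ | 2 < |x^2 - lam^2 - 2|} ∈ 𝓝 E := by
      have : IsOpen {x : ℝ | 2 < |x^2 - lam^2 - 2|} :=
        isOpen_lt continuous_const hcont
      refine this.mem_nhds ?_
      simpa [t1_eq] using ht1
    have hS : ({x : ℝ | |t lam x 1| ≤ 2} ∪ {x : ℝ | |t lam x 2| ≤ 2}) ∈ 𝓝 E :=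
      mem_interior_iff_mem_nhds.mp hE
    set P : ℝ → ℝ := fun x => (x^2 - lam^2)^2 - 4*x^2 with hPdef
    have hmax : IsLocalMax P E := by
      filter_upwards [hU, hS] with x hx hxS
      have hx2 : |t lam x 2| ≤ 2 := by
        rcases hxS with h | h
        · exfalso
          simp only [Set.mem_setOf_eq, t1_eq] at h hx
          linarith
        · exact h
      have : t lam x 2 ≤ 2 := (abs_le.mp hx2).2
      rw [t2_eq] at this
      simp only [hPdef, hP0]
      linarith
    have hderiv : HasDerivAt P (2*(E^2 - lam^2)*(2*E) - 4*(2*E)) E := by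
      have h1 : HasDerivAt (fun x : ℝ => x^2) (2*E) E := by
        simpa using hasDerivAt_pow 2 E
      have h2 : HasDerivAt (fun x : ℝ => x^2 - lam^2) (2*E) E := h1.sub_const _
      have h3 : HasDerivAt (fun x : ℝ => (x^2 - lam^2)^2) (2*(E^2 - lam^2)*(2*E)) E := by
        have := h2.fun_pow 2
        simpa [mul_comm, mul_assoc, mul_left_comm] using this
      have h4 : HasDerivAt (fun x : ℝ => 4*x^2) (4*(2*E)) E := h1.const_mul 4
      exact h3.sub h4
    have hd0 : 2*(E^2 - lam^2)*(2*E) - 4*(2*E) = 0 := by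
      have := hmax.deriv_eq_zero
      rw [hderiv.deriv] at this
      exact this
    have hfac : 4*E*(E^2 - lam^2 - 2) = 0 := by linarith [hd0]
    rcases mul_eq_zero.mp hfac with h | h
    · rcases mul_eq_zero.mp h with h' | h'
      · norm_num at h'
      · -- E = 0
        rw [h'] at hP0
        nlinarith
    · -- E² − λ² = 2
      have hE2 : E^2 - lam^2 = 2 := by linarith
      rw [hE2] at hP0
      nlinarith

/-- **Lemma (initial conditions for the trace recursion).**
`t₁(E)² − t₂(E) − 2 = 4λ²` for every `E ∈ ℝ`, and `t₂(E)² − t₃(E) − 2 > 0` for every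
`E` in the interior of `σ₁ ∪ σ₂`, where `σ_n = {E : |t_n(E)| ≤ 2}`. -/
theorem initial_condition (lam : ℝ) (hlam : lam ≠ 0) :
    (∀ E : ℝ, t lam E 1 ^ 2 - t lam E 2 - 2 = 4 * lam ^ 2) ∧
    (∀ E ∈ interior ({E : ℝ | |t lam E 1| ≤ 2} ∪ {E : ℝ | |t lam E 2| ≤ 2}),
      0 < t lam E 2 ^ 2 - t lam E 3 - 2) := by
  constructor
  · intro E
    rw [t1_eq, t2_eq]
    ring
  · intro E hE
    have h2 := t2_lt_two lam hlam E hE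
    have hlam2 : 0 < lam ^ 2 := by positivity
    have key : t lam E 2 ^ 2 - t lam E 3 - 2 = 4 * lam ^ 2 * (2 - t lam E 2) := by
      rw [t2_eq, t3_eq]
      ring
    rw [key]
    have : 0 < 2 - t lam E 2 := by linarith
    positivity

end TMH
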